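/- Let N ≥ 3 be a fixed integer and m an integer with 1 ≤ m < N/2. Let j = (j_{-m}, j_{-m+1}, ..., j_m) be a (2m+1)-tuple of elements of {0,1,...,N} such that j_{-m} = j_m = N−m and j_0 ≠ N. For each ε ∈ (0,1/3] let Y^{(ε)} = (Y^{(ε)}_k, k ∈ ℤ) be a strictly stationary Markov chain satisfying Condition S(N,ε). Then P(⋂_{k=−m}^{m} {Y^{(ε)}_k = j_k}) = o(ε^{2N−1}) as ε → 0+, i.e. P(⋂_{k=−m}^{m} {Y^{(ε)}_k = j_k}) / ε^{2N−1} → 0 as ε → 0+. -/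

import Mathlib

open MeasureTheory ProbabilityTheory Filter Set
open scoped ENNReal Topology

noncomputable section

variable {Ω : Type*}

/-- The σ-field generated by the random variables `X k`, `k ∈ S`. -/
def sigmaOf [MeasurableSpace Ω] (X : ℤ → Ω → ℝ) (S : Set ℤ) : MeasurableSpace Ω :=
  ⨆ k ∈ S, MeasurableSpace.comap (X k) inferInstance

/-- A sequence indexed by `ℤ` is strictly stationary if its law (as a measure on `ℤ → ℝ`)
is invariant under the index shift. -/
def StrictlyStationary [MeasurableSpace Ω] (P : Measure Ω) (X : ℤ → Ω → ℝ) : Prop :=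
  ∀ n : ℤ, Measure.map (fun ω => fun k : ℤ => X (k + n) ω) P
    = Measure.map (fun ω => fun k : ℤ => X k ω) P

/-- Markov chain: for each `k`, the past `σ(X_j, j ≤ k)` and the future `σ(X_j, j ≥ k)`
are conditionally independent given the present `σ(X_k)`. -/
def IsMarkovChain [MeasurableSpace Ω] (P : Measure Ω) (X : ℤ → Ω → ℝ) : Prop :=
  (∀ k, Measurable (X k)) ∧
  ∀ k : ℤ, ∀ A B : Set Ω, MeasurableSet[sigmaOf X (Set.Iic k)] A →
    MeasurableSet[sigmaOf X (Set.Ici k)] B →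
    (fun ω => (P[A.indicator (fun _ => (1:ℝ)) | sigmaOf X {k}]) ω *
              (P[B.indicator (fun _ => (1:ℝ)) | sigmaOf X {k}]) ω)
      =ᵐ[P] P[(A ∩ B).indicator (fun _ => (1:ℝ)) | sigmaOf X {k}]

/-- Covariance of two real random variables. -/
def covP [MeasurableSpace Ω] (P : Measure Ω) (f g : Ω → ℝ) : ℝ :=
  ∫ ω, (f ω - ∫ x, f x ∂P) * (g ω - ∫ x, g x ∂P) ∂P

/-- Correlation coefficient of two real random variables (with the convention 0/0 = 0). -/
def corrP [MeasurableSpace Ω] (P : Measure Ω) (f g : Ω → ℝ) : ℝ :=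
  covP P f g / (Real.sqrt (covP P f f) * Real.sqrt (covP P g g))

/-- Maximal correlation coefficient ρ(𝒜,ℬ): the supremum of |Corr(f,g)| over square-integrable
`f` measurable w.r.t. `mA` and `g` measurable w.r.t. `mB`. -/
def maxCorr (mA mB : MeasurableSpace Ω) [MeasurableSpace Ω] (P : Measure Ω) : ℝ :=
  sSup {r : ℝ | ∃ f g : Ω → ℝ, Measurable[mA] f ∧ Measurable[mB] g ∧
    MemLp f 2 P ∧ MemLp g 2 P ∧ r = |corrP P f g|}

/-- η(A,B) = P(A∩B)/(P(A)P(B)) (with the convention 0/0 = 0). -/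
def etaP [MeasurableSpace Ω] (P : Measure Ω) (A B : Set Ω) : ℝ :=
  (P (A ∩ B)).toReal / ((P A).toReal * (P B).toReal)

/-- ψ dependence coefficient, with values in `[0,∞]`. -/
def psiDep (mA mB : MeasurableSpace Ω) [MeasurableSpace Ω] (P : Measure Ω) : ℝ≥0∞ :=
  ⨆ (A : Set Ω) (B : Set Ω) (_ : MeasurableSet[mA] A) (_ : MeasurableSet[mB] B)
    (_ : 0 < P A) (_ : 0 < P B), ENNReal.ofReal |etaP P A B - 1|

/-- A finite partition of `Ω` into `m`-measurable events of positive probability. -/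
def IsFinPartition (m : MeasurableSpace Ω) [MeasurableSpace Ω] (P : Measure Ω)
    {n : ℕ} (A : Fin n → Set Ω) : Prop :=
  (∀ i, MeasurableSet[m] (A i)) ∧ (∀ i, 0 < P (A i)) ∧
  (Pairwise fun i j => Disjoint (A i) (A j)) ∧ (⋃ i, A i) = Set.univ

/-- Coefficient of information I(𝒜,ℬ), valued in `[0,∞]`
(note `Real.log 0 = 0`, so `0 log 0 = 0` automatically). -/
def infoCoef (mA mB : MeasurableSpace Ω) [MeasurableSpace Ω] (P : Measure Ω) : ℝ≥0∞ :=
  ⨆ (nI : ℕ) (nJ : ℕ) (A : Fin nI → Set Ω) (B : Fin nJ → Set Ω)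
    (_ : IsFinPartition mA P A) (_ : IsFinPartition mB P B),
    ENNReal.ofReal (∑ i, ∑ j,
      (P (A i)).toReal * (P (B j)).toReal *
        (etaP P (A i) (B j) * Real.log (etaP P (A i) (B j))))

/-- β dependence coefficient (absolute regularity coefficient). -/
def betaDep (mA mB : MeasurableSpace Ω) [MeasurableSpace Ω] (P : Measure Ω) : ℝ :=
  sSup {r : ℝ | ∃ (nI nJ : ℕ) (A : Fin nI → Set Ω) (B : Fin nJ → Set Ω),
    IsFinPartition mA P A ∧ IsFinPartition mB P B ∧
    r = (1/2) * ∑ i, ∑ j,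
      |(P (A i ∩ B j)).toReal - (P (A i)).toReal * (P (B j)).toReal|}

/-- ρ(X,n) -/
def rhoMix [MeasurableSpace Ω] (P : Measure Ω) (X : ℤ → Ω → ℝ) (n : ℕ) : ℝ :=
  maxCorr (sigmaOf X (Set.Iic 0)) (sigmaOf X (Set.Ici (n:ℤ))) P

/-- β(X,n) -/
def betaMix [MeasurableSpace Ω] (P : Measure Ω) (X : ℤ → Ω → ℝ) (n : ℕ) : ℝ :=
  betaDep (sigmaOf X (Set.Iic 0)) (sigmaOf X (Set.Ici (n:ℤ))) P

/-- I(X,n) -/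
def infoMix [MeasurableSpace Ω] (P : Measure Ω) (X : ℤ → Ω → ℝ) (n : ℕ) : ℝ≥0∞ :=
  infoCoef (sigmaOf X (Set.Iic 0)) (sigmaOf X (Set.Ici (n:ℤ))) P

/-- ψ(X,n) -/
def psiMix [MeasurableSpace Ω] (P : Measure Ω) (X : ℤ → Ω → ℝ) (n : ℕ) : ℝ≥0∞ :=
  psiDep (sigmaOf X (Set.Iic 0)) (sigmaOf X (Set.Ici (n:ℤ))) P

/-- Interlaced maximal correlation coefficient ρ*(X,n): the supremum of
ρ(σ(X_k, k ∈ S), σ(X_k, k ∈ T)) over nonempty disjoint S, T ⊂ ℤ with dist(S,T) ≥ n. -/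
def rhoStar [MeasurableSpace Ω] (P : Measure Ω) (X : ℤ → Ω → ℝ) (n : ℕ) : ℝ :=
  sSup {r : ℝ | ∃ S T : Set ℤ, S.Nonempty ∧ T.Nonempty ∧ Disjoint S T ∧
    (∀ s ∈ S, ∀ t ∈ T, (n:ℤ) ≤ |s - t|) ∧ r = maxCorr (sigmaOf X S) (sigmaOf X T) P}

/-- Condition S(N,ε) of Definition 2.1: a strictly stationary Markov chain with state space
`{0,1,...,N}` (as reals) whose joint law of `(Y_0, Y_1)` is as prescribed. -/
def ConditionS [MeasurableSpace Ω] (P : Measure Ω) (N : ℕ) (ε : ℝ) (Y : ℤ → Ω → ℝ) : Prop :=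
  StrictlyStationary P Y ∧ IsMarkovChain P Y ∧
  (∀ᵐ ω ∂P, ∃ i : ℕ, i ≤ N ∧ Y 0 ω = (i:ℝ)) ∧
  (P {ω | Y 0 ω = 0 ∧ Y 1 ω = 0}).toReal
      = 1 - 2 * (ε^(2*N-1) + ∑ u ∈ Finset.Icc 1 (N-1), ε^(2*u)) ∧
  (∀ m : ℕ, 1 ≤ m → m ≤ N - 1 →
    (P {ω | Y 0 ω = (m:ℝ) - 1 ∧ Y 1 ω = (m:ℝ)}).toReal = ε^(2*m) ∧
    (P {ω | Y 0 ω = (m:ℝ) ∧ Y 1 ω = (m:ℝ) - 1}).toReal = ε^(2*m)) ∧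
  (P {ω | Y 0 ω = (N:ℝ) - 1 ∧ Y 1 ω = (N:ℝ)}).toReal = ε^(2*N-1) ∧
  (P {ω | Y 0 ω = (N:ℝ) ∧ Y 1 ω = (N:ℝ) - 1}).toReal = ε^(2*N-1) ∧
  (∀ i j : ℕ, i ≤ N → j ≤ N → ((i = j ∧ 1 ≤ i) ∨ 2 ≤ |(i:ℤ) - (j:ℤ)|) →
    P {ω | Y 0 ω = (i:ℝ) ∧ Y 1 ω = (j:ℝ)} = 0)

/-- `m`-step transition probability `P(Y_m = j | Y_0 = i)` (with the convention 0/0 = 0). -/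
def transProb [MeasurableSpace Ω] (P : Measure Ω) (Y : ℤ → Ω → ℝ) (m : ℕ) (i j : ℕ) : ℝ :=
  (P {ω | Y 0 ω = (i:ℝ) ∧ Y (m:ℤ) ω = (j:ℝ)}).toReal / (P {ω | Y 0 ω = (i:ℝ)}).toReal

/-! ### Auxiliary lemmas -/

section Aux

variable [MeasurableSpace Ω]

lemma sigmaOf_singleton (X : ℤ → Ω → ℝ) (k : ℤ) :
    sigmaOf X ({k} : Set ℤ) = MeasurableSpace.comap (X k) inferInstance := by
  apply le_antisymm
  · refine iSup_le fun i => iSup_le fun hi => ?_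
    rcases hi with rfl; exact le_rfl
  · exact le_iSup₂ (f := fun i (_ : i ∈ ({k} : Set ℤ)) =>
      MeasurableSpace.comap (X i) inferInstance) k rfl

lemma sigmaOf_le (X : ℤ → Ω → ℝ) (hX : ∀ k, Measurable (X k)) (S : Set ℤ) :
    sigmaOf X S ≤ ‹MeasurableSpace Ω› :=
  iSup_le fun i => iSup_le fun _ => (hX i).comap_le

lemma measurableSet_sigmaOf (X : ℤ → Ω → ℝ) {S : Set ℤ} {i : ℤ} (hi : i ∈ S)
    {s : Set ℝ} (hs : MeasurableSet s) : MeasurableSet[sigmaOf X S] (X i ⁻¹' s) := by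
  have hle : MeasurableSpace.comap (X i) inferInstance ≤ sigmaOf X S :=
    le_iSup₂ (f := fun k (_ : k ∈ S) => MeasurableSpace.comap (X k) inferInstance) i hi
  exact hle _ ⟨s, hs, rfl⟩

-- The key Markov-chain factorization step.
set_option maxHeartbeats 1000000 in
lemma markov_step (P : Measure Ω) [IsProbabilityMeasure P]
    (Y : ℤ → Ω → ℝ) (hM : IsMarkovChain P Y) (k : ℤ) (c d : ℝ)
    (A : Set Ω) (hA_meas : MeasurableSet[sigmaOf Y (Set.Iic k)] A)
    (hA_sub : A ⊆ Y k ⁻¹' {c}) :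
    (P (A ∩ Y (k+1) ⁻¹' {d})).toReal * (P (Y k ⁻¹' {c})).toReal
      = (P A).toReal * (P (Y k ⁻¹' {c} ∩ Y (k+1) ⁻¹' {d})).toReal := by
  obtain ⟨hYmeas, hMarkov⟩ := hM
  set C : Set Ω := Y k ⁻¹' {c} with hC_def
  set B : Set Ω := Y (k+1) ⁻¹' {d} with hB_def
  have hC_amb : MeasurableSet C := hYmeas k (measurableSet_singleton c)
  have hB_amb : MeasurableSet B := hYmeas (k+1) (measurableSet_singleton d)
  have hm : sigmaOf Y ({k} : Set ℤ) ≤ ‹MeasurableSpace Ω› := sigmaOf_le Y hYmeas _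
  have hA_amb : MeasurableSet A := sigmaOf_le Y hYmeas _ _ hA_meas
  by_cases hPC : P C = 0
  · have hPA : P A = 0 := measure_mono_null hA_sub hPC
    have : P (A ∩ B) = 0 := measure_mono_null Set.inter_subset_left hPA
    simp [this, hPA, hPC]
  -- C is nonempty
  obtain ⟨ω₀, hω₀⟩ : C.Nonempty := by
    rcases Set.eq_empty_or_nonempty C with h | h
    · exact absurd (h ▸ measure_empty) hPC
    · exact h
  have hC_m : MeasurableSet[sigmaOf Y ({k} : Set ℤ)] C := by
    rw [hC_def]
    exact measurableSet_sigmaOf (S := ({k} : Set ℤ)) (i := k) Y (Set.mem_singleton k)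
      (measurableSet_singleton c)
  have hB_fut : MeasurableSet[sigmaOf Y (Set.Ici k)] B := by
    rw [hB_def]
    exact measurableSet_sigmaOf (S := Set.Ici k) (i := k+1) Y
      (by simp : (k+1) ∈ Set.Ici k) (measurableSet_singleton d)
  set fA := P[A.indicator (fun _ => (1:ℝ)) | sigmaOf Y ({k} : Set ℤ)] with hfA_def
  set fB := P[B.indicator (fun _ => (1:ℝ)) | sigmaOf Y ({k} : Set ℤ)] with hfB_def
  have hmarkov := hMarkov k A B hA_meas hB_fut
  have intA : Integrable (A.indicator (fun _ => (1:ℝ))) P :=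
    (integrable_const (1:ℝ)).indicator hA_amb
  have intB : Integrable (B.indicator (fun _ => (1:ℝ))) P :=
    (integrable_const (1:ℝ)).indicator hB_amb
  have intAB : Integrable ((A ∩ B).indicator (fun _ => (1:ℝ))) P :=
    (integrable_const (1:ℝ)).indicator (hA_amb.inter hB_amb)
  -- fB is constant on C
  have hfB_const : ∀ ω ∈ C, fB ω = fB ω₀ := by
    intro ω hω
    have hfB_meas : Measurable[sigmaOf Y ({k} : Set ℤ)] fB :=
      stronglyMeasurable_condExp.measurable
    have hT : MeasurableSet[sigmaOf Y ({k} : Set ℤ)] (fB ⁻¹' {fB ω}) :=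
      hfB_meas (measurableSet_singleton _)
    rw [sigmaOf_singleton] at hT
    obtain ⟨s, _, hpre⟩ := hT
    have hωT : ω ∈ fB ⁻¹' {fB ω} := Set.mem_singleton _
    have hωs : Y k ω ∈ s := by rw [← hpre] at hωT; exact hωT
    have hckc : Y k ω₀ = Y k ω := by
      have h1 : Y k ω = c := hω
      have h2 : Y k ω₀ = c := hω₀
      rw [h1, h2]
    have : ω₀ ∈ fB ⁻¹' {fB ω} := by
      rw [← hpre]; show Y k ω₀ ∈ s; rw [hckc]; exact hωs
    exact (this : fB ω₀ = fB ω).symm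
  -- value of the constant
  have hsetB : ∫ x in C, fB x ∂P = (P (C ∩ B)).toReal := by
    rw [setIntegral_condExp hm intB hC_m, ← integral_indicator hC_amb,
      Set.indicator_indicator, integral_indicator_const _ (hC_amb.inter hB_amb)]
    simp [measureReal_def]
  have hsetB' : ∫ x in C, fB x ∂P = (P C).toReal * fB ω₀ := by
    rw [setIntegral_congr_fun hC_amb (fun x hx => hfB_const x hx), setIntegral_const,
      smul_eq_mul, measureReal_def]
  have hcval : fB ω₀ * (P C).toReal = (P (C ∩ B)).toReal := by
    rw [mul_comm, ← hsetB', hsetB]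
  -- fA vanishes a.e. outside C
  have hfa_ind : fA =ᵐ[P] C.indicator fA := by
    have h := condExp_indicator (m := sigmaOf Y ({k} : Set ℤ)) (μ := P) intA hC_m
    rwa [Set.indicator_indicator, Set.inter_eq_self_of_subset_right hA_sub] at h
  -- main chain of equalities
  have hmain : (P (A ∩ B)).toReal = fB ω₀ * (P A).toReal := by
    have e1 : (P (A ∩ B)).toReal = ∫ ω, (A ∩ B).indicator (fun _ => (1:ℝ)) ω ∂P := by
      rw [integral_indicator_const _ (hA_amb.inter hB_amb)]; simp [measureReal_def]
    have e2 : ∫ ω, (A ∩ B).indicator (fun _ => (1:ℝ)) ω ∂P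
        = ∫ ω, (P[(A ∩ B).indicator (fun _ => (1:ℝ)) | sigmaOf Y ({k} : Set ℤ)]) ω ∂P :=
      (integral_condExp hm).symm
    have e3 : ∫ ω, (P[(A ∩ B).indicator (fun _ => (1:ℝ)) | sigmaOf Y ({k} : Set ℤ)]) ω ∂P
        = ∫ ω, fA ω * fB ω ∂P := integral_congr_ae hmarkov.symm
    have e4 : (fun ω => fA ω * fB ω) =ᵐ[P] fun ω => fB ω₀ * C.indicator fA ω := by
      filter_upwards [hfa_ind] with ω hω
      by_cases hmem : ω ∈ C
      · rw [Set.indicator_of_mem hmem, hfB_const ω hmem, mul_comm]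
      · rw [Set.indicator_of_notMem hmem, mul_zero, hω, Set.indicator_of_notMem hmem,
          zero_mul]
    have e5 : ∫ ω, fA ω * fB ω ∂P = fB ω₀ * ∫ ω, C.indicator fA ω ∂P := by
      rw [integral_congr_ae e4, integral_const_mul]
    have e6 : ∫ ω, C.indicator fA ω ∂P = (P A).toReal := by
      rw [integral_indicator hC_amb, setIntegral_condExp hm intA hC_m,
        ← integral_indicator hC_amb, Set.indicator_indicator,
        Set.inter_eq_self_of_subset_right hA_sub,
        integral_indicator_const _ hA_amb]
      simp [measureReal_def]
    rw [e1, e2, e3, e5, e6]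
  rw [hmain, ← hcval]; ring

lemma stationary_pair (P : Measure Ω) (Y : ℤ → Ω → ℝ) (hS : StrictlyStationary P Y)
    (hmeas : ∀ k, Measurable (Y k)) (n : ℤ) (a b : ℝ) :
    P {ω | Y n ω = a ∧ Y (1+n) ω = b} = P {ω | Y 0 ω = a ∧ Y 1 ω = b} := by
  have hmap1 : Measurable fun ω => fun k : ℤ => Y (k + n) ω :=
    measurable_pi_lambda _ fun k => hmeas (k + n)
  have hmap2 : Measurable fun ω => fun k : ℤ => Y k ω :=
    measurable_pi_lambda _ fun k => hmeas k
  set S : Set (ℤ → ℝ) := (fun f : ℤ → ℝ => f 0) ⁻¹' {a} ∩ (fun f : ℤ → ℝ => f 1) ⁻¹' {b}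
    with hSdef
  have hSmeas : MeasurableSet S :=
    ((measurable_pi_apply 0) (measurableSet_singleton a)).inter
      ((measurable_pi_apply 1) (measurableSet_singleton b))
  have h := congrArg (fun μ : Measure (ℤ → ℝ) => μ S) (hS n)
  rw [Measure.map_apply hmap1 hSmeas, Measure.map_apply hmap2 hSmeas] at h
  have h1 : (fun ω => fun k : ℤ => Y (k + n) ω) ⁻¹' S
      = {ω | Y (0+n) ω = a ∧ Y (1+n) ω = b} := rfl
  have h2 : (fun ω => fun k : ℤ => Y k ω) ⁻¹' S = {ω | Y 0 ω = a ∧ Y 1 ω = b} := rfl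
  rw [h1, h2, zero_add] at h
  exact h

lemma stationary_single (P : Measure Ω) (Y : ℤ → Ω → ℝ) (hS : StrictlyStationary P Y)
    (hmeas : ∀ k, Measurable (Y k)) (n : ℤ) (a : ℝ) :
    P {ω | Y n ω = a} = P {ω | Y 0 ω = a} := by
  have hmap1 : Measurable fun ω => fun k : ℤ => Y (k + n) ω :=
    measurable_pi_lambda _ fun k => hmeas (k + n)
  have hmap2 : Measurable fun ω => fun k : ℤ => Y k ω :=
    measurable_pi_lambda _ fun k => hmeas k
  set S : Set (ℤ → ℝ) := (fun f : ℤ → ℝ => f 0) ⁻¹' {a} with hSdef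
  have hSmeas : MeasurableSet S := (measurable_pi_apply 0) (measurableSet_singleton a)
  have h := congrArg (fun μ : Measure (ℤ → ℝ) => μ S) (hS n)
  rw [Measure.map_apply hmap1 hSmeas, Measure.map_apply hmap2 hSmeas] at h
  have h1 : (fun ω => fun k : ℤ => Y (k + n) ω) ⁻¹' S = {ω | Y (0+n) ω = a} := rfl
  have h2 : (fun ω => fun k : ℤ => Y k ω) ⁻¹' S = {ω | Y 0 ω = a} := rfl
  rw [h1, h2, zero_add] at h
  exact h

lemma measurableSet_cyl (X : ℤ → Ω → ℝ) (_hX : ∀ k, Measurable (X k)) (j : ℤ → ℕ)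
    (a k : ℤ) :
    MeasurableSet[sigmaOf X (Set.Iic k)] {ω | ∀ i : ℤ, a ≤ i → i ≤ k → X i ω = (j i : ℝ)} := by
  have heq : {ω | ∀ i : ℤ, a ≤ i → i ≤ k → X i ω = (j i : ℝ)}
      = ⋂ i ∈ {i : ℤ | a ≤ i ∧ i ≤ k}, X i ⁻¹' {(j i : ℝ)} := by
    ext ω
    simp only [Set.mem_setOf_eq, Set.mem_iInter, Set.mem_preimage, Set.mem_singleton_iff,
      and_imp]
  rw [heq]
  exact MeasurableSet.biInter (Set.to_countable _)
    (fun i hi => measurableSet_sigmaOf (S := Set.Iic k) (i := i) X hi.2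
      (measurableSet_singleton _))

end Aux

/-- Eq. (2.26): for a `(2m+1)`-tuple `j` of states with `j_{-m} = j_m = N−m` and `j_0 ≠ N`,
`P(⋂_{k=-m}^{m} {Y^{(ε)}_k = j_k}) = o(ε^{2N−1})` as `ε → 0+`. -/
theorem conditionS_cylinder_little_o [MeasurableSpace Ω] (P : Measure Ω)
    [IsProbabilityMeasure P] (N : ℕ) (hN : 3 ≤ N) (m : ℕ) (hm1 : 1 ≤ m) (hm2 : 2 * m < N)
    (j : ℤ → ℕ) (hjN : ∀ k : ℤ, -(m:ℤ) ≤ k → k ≤ (m:ℤ) → j k ≤ N)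
    (hjm : j (-(m:ℤ)) = N - m) (hjm' : j (m:ℤ) = N - m) (hj0 : j 0 ≠ N)
    (Y : ℝ → ℤ → Ω → ℝ)
    (hY : ∀ ε ∈ Set.Ioc (0:ℝ) (1/3), ConditionS P N ε (Y ε)) :
    Tendsto (fun ε : ℝ =>
        (P {ω | ∀ k : ℤ, -(m:ℤ) ≤ k → k ≤ (m:ℤ) → Y ε k ω = (j k : ℝ)}).toReal / ε^(2*N-1))
      (𝓝[>] 0) (𝓝 0) := by
  classical
  have hIoc : Set.Ioc (0:ℝ) (1/3) ∈ 𝓝[>] (0:ℝ) :=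
    Ioc_mem_nhdsGT_of_mem ⟨le_refl (0:ℝ), by norm_num⟩
  by_cases hbad : ∃ k : ℤ, (-(m:ℤ) ≤ k ∧ k < (m:ℤ)) ∧
      ¬(j (k+1) = j k + 1 ∨ j k = j (k+1) + 1 ∨ (j k = 0 ∧ j (k+1) = 0))
  · -- degenerate case: the cylinder has probability zero
    obtain ⟨k, ⟨hk1, hk2⟩, hk3⟩ := hbad
    have hzero : ∀ ε ∈ Set.Ioc (0:ℝ) (1/3),
        P {ω | ∀ i : ℤ, -(m:ℤ) ≤ i → i ≤ (m:ℤ) → Y ε i ω = (j i : ℝ)} = 0 := by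
      intro ε hε
      obtain ⟨hstat, hmc, _, _, _, _, _, hz⟩ := hY ε hε
      have hsub : {ω | ∀ i : ℤ, -(m:ℤ) ≤ i → i ≤ (m:ℤ) → Y ε i ω = (j i : ℝ)}
          ⊆ {ω | Y ε k ω = (j k : ℝ) ∧ Y ε (1+k) ω = (j (k+1) : ℝ)} := by
        intro ω hω
        refine ⟨hω k hk1 (by omega), ?_⟩
        have h2 := hω (k+1) (by omega) (by omega)
        rwa [add_comm 1 k]
      refine le_antisymm ?_ (zero_le)
      calc P {ω | ∀ i : ℤ, -(m:ℤ) ≤ i → i ≤ (m:ℤ) → Y ε i ω = (j i : ℝ)}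
          ≤ P {ω | Y ε k ω = (j k : ℝ) ∧ Y ε (1+k) ω = (j (k+1) : ℝ)} := measure_mono hsub
        _ = P {ω | Y ε 0 ω = (j k : ℝ) ∧ Y ε 1 ω = (j (k+1) : ℝ)} :=
            stationary_pair P (Y ε) hstat hmc.1 k _ _
        _ = 0 := by
            apply hz (j k) (j (k+1)) (hjN k hk1 (by omega)) (hjN (k+1) (by omega) (by omega))
            have hd : (j k = j (k+1) ∧ 1 ≤ j k) ∨ 2 ≤ (j k:ℤ) - j (k+1)
                ∨ 2 ≤ (j (k+1):ℤ) - j k := by omega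
            rcases hd with h | h | h
            · exact Or.inl h
            · exact Or.inr (le_abs.mpr (Or.inl h))
            · exact Or.inr (le_abs.mpr (Or.inr (by linarith)))
    have hev : (fun ε : ℝ =>
        (P {ω | ∀ k : ℤ, -(m:ℤ) ≤ k → k ≤ (m:ℤ) → Y ε k ω = (j k : ℝ)}).toReal / ε^(2*N-1))
        =ᶠ[𝓝[>] (0:ℝ)] fun _ => (0:ℝ) := by
      filter_upwards [hIoc] with ε hε
      rw [hzero ε hε]
      simp
    exact Tendsto.congr' hev.symm tendsto_const_nhds
  · -- regular case
    push_neg at hbad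
    have hstepabs : ∀ k : ℤ, -(m:ℤ) ≤ k → k < m →
        ((j (k+1) : ℤ) - j k ≤ 1 ∧ (j k : ℤ) - j (k+1) ≤ 1) := by
      intro k h1 h2
      have := hbad k ⟨h1, h2⟩
      omega
    have hL : ∀ t : ℕ, t ≤ 2*m →
        (N:ℤ) - m - t ≤ (j (-(m:ℤ) + t) : ℤ) ∧ (j (-(m:ℤ) + t) : ℤ) ≤ (N:ℤ) - m + t := by
      intro t
      induction t with
      | zero =>
        intro _
        simp only [Nat.cast_zero, add_zero]
        rw [hjm]
        omega
      | succ t ih =>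
        intro ht
        have hb := ih (by omega)
        have hs := hstepabs (-(m:ℤ) + t) (by omega) (by omega)
        have hidx : -(m:ℤ) + ((t+1:ℕ):ℤ) = (-(m:ℤ) + t) + 1 := by push_cast; ring
        rw [hidx]
        omega
    have hR : ∀ t : ℕ, t ≤ 2*m →
        (N:ℤ) - m - t ≤ (j ((m:ℤ) - t) : ℤ) ∧ (j ((m:ℤ) - t) : ℤ) ≤ (N:ℤ) - m + t := by
      intro t
      induction t with
      | zero =>
        intro _
        simp only [Nat.cast_zero, sub_zero]
        rw [hjm']
        omega
      | succ t ih =>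
        intro ht
        have hb := ih (by omega)
        have hs := hstepabs ((m:ℤ) - t - 1) (by omega) (by omega)
        have hidx : (m:ℤ) - ((t+1:ℕ):ℤ) = (m:ℤ) - t - 1 := by push_cast; ring
        have hidx2 : (m:ℤ) - (t:ℤ) = ((m:ℤ) - t - 1) + 1 := by ring
        rw [hidx]
        rw [hidx2] at hb
        omega
    have hrange : ∀ k : ℤ, -(m:ℤ) ≤ k → k ≤ (m:ℤ) → 1 ≤ j k ∧ j k < N := by
      intro k hk1 hk2
      have e1 : -(m:ℤ) + (((k + m).toNat : ℕ) : ℤ) = k := by omega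
      have e2 : (m:ℤ) - (((m - k).toNat : ℕ) : ℤ) = k := by omega
      have h1 := hL (k+m).toNat (by omega)
      have h2 := hR (m-k).toNat (by omega)
      rw [e1] at h1
      rw [e2] at h2
      have hN' := hjN k hk1 hk2
      constructor
      · omega
      · by_contra hcon
        have hkN : j k = N := by omega
        have hk0 : k = 0 := by omega
        rw [hk0] at hkN
        exact hj0 hkN
    have hstep2 : ∀ k : ℤ, -(m:ℤ) ≤ k → k < m →
        (j (k+1) = j k + 1 ∨ j k = j (k+1) + 1) := by
      intro k h1 h2
      have hd := hbad k ⟨h1, h2⟩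
      have hr := (hrange k h1 (by omega)).1
      omega
    -- the main quantitative bound
    have hbound : ∀ ε ∈ Set.Ioc (0:ℝ) (1/3),
        (P {ω | ∀ i : ℤ, -(m:ℤ) ≤ i → i ≤ (m:ℤ) → Y ε i ω = (j i : ℝ)}).toReal
          ≤ ε ^ (2*N) := by
      intro ε hε
      obtain ⟨hstat, hmc, hrangeY, h00, hpairP, hN1, hN2, hz⟩ := hY ε hε
      have hYm := hmc.1
      have hεpos : (0:ℝ) < ε := hε.1
      set A : ℤ → Set Ω :=
        fun k => {ω | ∀ i : ℤ, -(m:ℤ) ≤ i → i ≤ k → Y ε i ω = (j i : ℝ)} with hAdef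
      have pairval : ∀ k : ℤ, -(m:ℤ) ≤ k → k < m →
          (P (Y ε k ⁻¹' {(j k : ℝ)} ∩ Y ε (k+1) ⁻¹' {(j (k+1) : ℝ)})).toReal
            = ε ^ (2 * max (j k) (j (k+1))) := by
        intro k h1 h2
        have hset : Y ε k ⁻¹' {(j k : ℝ)} ∩ Y ε (k+1) ⁻¹' {(j (k+1) : ℝ)}
            = {ω | Y ε k ω = (j k : ℝ) ∧ Y ε (1+k) ω = (j (k+1) : ℝ)} := by
          rw [add_comm 1 k]
          rfl
        rw [hset, stationary_pair P (Y ε) hstat hYm k _ _]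
        rcases hstep2 k h1 h2 with hup | hdn
        · have hb1 : 1 ≤ j (k+1) := by omega
          have hb2 : j (k+1) ≤ N - 1 := by
            have := (hrange (k+1) (by omega) (by omega)).2
            omega
          have hval := (hpairP (j (k+1)) hb1 hb2).1
          have hc : ((j k : ℕ) : ℝ) = (j (k+1) : ℝ) - 1 := by
            rw [hup]; push_cast; ring
          simp only [hc]
          rw [hval]
          have hmax : max (j k) (j (k+1)) = j (k+1) := max_eq_right (by omega)
          rw [hmax]
        · have hb1 : 1 ≤ j k := by omega
          have hb2 : j k ≤ N - 1 := by
            have := (hrange k h1 (by omega)).2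
            omega
          have hval := (hpairP (j k) hb1 hb2).2
          have hc : ((j (k+1) : ℕ) : ℝ) = (j k : ℝ) - 1 := by
            rw [hdn]; push_cast; ring
          simp only [hc]
          rw [hval]
          have hmax : max (j k) (j (k+1)) = j k := max_eq_left (by omega)
          rw [hmax]
      have marg : ∀ k : ℤ, -(m:ℤ) ≤ k → k ≤ (m:ℤ) →
          ε ^ (2 * j k) ≤ (P (Y ε k ⁻¹' {(j k : ℝ)})).toReal := by
        intro k h1 h2
        have hr := hrange k h1 h2
        have hval := (hpairP (j k) hr.1 (by omega)).2
        have hsub : {ω | Y ε 0 ω = (j k : ℝ) ∧ Y ε 1 ω = (j k : ℝ) - 1}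
            ⊆ {ω | Y ε 0 ω = (j k : ℝ)} := fun ω hω => hω.1
        have hmono : (P {ω | Y ε 0 ω = (j k:ℝ) ∧ Y ε 1 ω = (j k:ℝ) - 1}).toReal
            ≤ (P {ω | Y ε 0 ω = (j k : ℝ)}).toReal :=
          ENNReal.toReal_mono (measure_ne_top P _) (measure_mono hsub)
        have hsingle : P (Y ε k ⁻¹' {(j k : ℝ)}) = P {ω | Y ε 0 ω = (j k : ℝ)} := by
          have hpre : Y ε k ⁻¹' {(j k : ℝ)} = {ω | Y ε k ω = (j k : ℝ)} := rfl
          rw [hpre, stationary_single P (Y ε) hstat hYm k _]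
        rw [hsingle, ← hval]
        exact hmono
      have hArec : ∀ k : ℤ, -(m:ℤ) ≤ k →
          A (k+1) = A k ∩ Y ε (k+1) ⁻¹' {(j (k+1) : ℝ)} := by
        intro k hk
        ext ω
        simp only [hAdef, Set.mem_inter_iff, Set.mem_setOf_eq, Set.mem_preimage,
          Set.mem_singleton_iff]
        constructor
        · intro h
          exact ⟨fun i h1 h2 => h i h1 (by omega), h (k+1) (by omega) le_rfl⟩
        · rintro ⟨h1, h2⟩ i hi1 hi2
          by_cases hik : i ≤ k
          · exact h1 i hi1 hik
          · have hieq : i = k+1 := by omega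
            rw [hieq]
            exact h2
      have hAbase : A (-(m:ℤ)+1)
          = Y ε (-(m:ℤ)) ⁻¹' {(j (-(m:ℤ)) : ℝ)}
            ∩ Y ε (-(m:ℤ)+1) ⁻¹' {(j (-(m:ℤ)+1) : ℝ)} := by
        ext ω
        simp only [hAdef, Set.mem_inter_iff, Set.mem_setOf_eq, Set.mem_preimage,
          Set.mem_singleton_iff]
        constructor
        · intro h
          exact ⟨h _ le_rfl (by omega), h _ (by omega) le_rfl⟩
        · rintro ⟨h1, h2⟩ i hi1 hi2
          have hii : i = -(m:ℤ) ∨ i = -(m:ℤ)+1 := by omega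
          rcases hii with hii | hii
          · rw [hii]; exact h1
          · rw [hii]; exact h2
      have hAmeas : ∀ k : ℤ, MeasurableSet[sigmaOf (Y ε) (Set.Iic k)] (A k) := by
        intro k
        rw [hAdef]
        exact measurableSet_cyl (Y ε) hYm j _ k
      have hAsub : ∀ k : ℤ, -(m:ℤ) ≤ k → A k ⊆ Y ε k ⁻¹' {(j k : ℝ)} :=
        fun k h1 ω hω => hω k h1 le_rfl
      have hind : ∀ t : ℕ, t ≤ 2*m - 1 →
          (P (A (-(m:ℤ)+1+(t:ℤ)))).toReal
            ≤ ε ^ ((N - m) + j (-(m:ℤ)+1+(t:ℤ)) + 1 + t) := by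
        intro t
        induction t with
        | zero =>
          intro _
          have h0 : -(m:ℤ)+1+((0:ℕ):ℤ) = -(m:ℤ)+1 := by push_cast; ring
          rw [h0, hAbase, pairval (-(m:ℤ)) le_rfl (by omega)]
          apply le_of_eq
          have hstep0 := hstep2 (-(m:ℤ)) le_rfl (by omega)
          congr 1
          rcases hstep0 with hup | hdn
          · have hmax : max (j (-(m:ℤ))) (j (-(m:ℤ)+1)) = j (-(m:ℤ)+1) :=
              max_eq_right (by omega)
            rw [hmax, hup, hjm]
            omega
          · have hmax : max (j (-(m:ℤ))) (j (-(m:ℤ)+1)) = j (-(m:ℤ)) :=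
              max_eq_left (by omega)
            rw [hmax] at *
            rw [hjm] at hdn ⊢
            omega
        | succ t ih =>
          intro ht
          have hIH := ih (by omega)
          set k : ℤ := -(m:ℤ)+1+(t:ℤ) with hkdef
          have hk1 : -(m:ℤ) ≤ k := by omega
          have hk2 : k < m := by omega
          have hidx : -(m:ℤ)+1+((t+1:ℕ):ℤ) = k+1 := by omega
          rw [hidx, hArec k hk1]
          have hms := markov_step P (Y ε) hmc k ((j k : ℝ)) ((j (k+1) : ℝ)) (A k)
            (hAmeas k) (hAsub k hk1)
          have hpv := pairval k hk1 hk2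
          have hmg := marg k hk1 (by omega)
          have hx0 : (0:ℝ) ≤ (P (A k ∩ Y ε (k+1) ⁻¹' {(j (k+1):ℝ)})).toReal :=
            ENNReal.toReal_nonneg
          have key : (P (A k ∩ Y ε (k+1) ⁻¹' {(j (k+1):ℝ)})).toReal * ε ^ (2 * j k)
              ≤ ε ^ ((N-m) + j k + 1 + t) * ε ^ (2 * max (j k) (j (k+1))) := by
            calc (P (A k ∩ Y ε (k+1) ⁻¹' {(j (k+1):ℝ)})).toReal * ε ^ (2 * j k)
                ≤ (P (A k ∩ Y ε (k+1) ⁻¹' {(j (k+1):ℝ)})).toReal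
                    * (P (Y ε k ⁻¹' {(j k:ℝ)})).toReal :=
                  mul_le_mul_of_nonneg_left hmg hx0
              _ = (P (A k)).toReal
                    * (P (Y ε k ⁻¹' {(j k:ℝ)} ∩ Y ε (k+1) ⁻¹' {(j (k+1):ℝ)})).toReal := hms
              _ = (P (A k)).toReal * ε ^ (2 * max (j k) (j (k+1))) := by rw [hpv]
              _ ≤ ε ^ ((N-m) + j k + 1 + t) * ε ^ (2 * max (j k) (j (k+1))) :=
                  mul_le_mul_of_nonneg_right hIH (pow_nonneg hεpos.le _)
          have hexp : (N-m) + j k + 1 + t + 2 * max (j k) (j (k+1))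
              = ((N-m) + j (k+1) + 1 + (t+1)) + 2 * j k := by
            rcases hstep2 k hk1 hk2 with hup | hdn
            · rw [max_eq_right (by omega : j k ≤ j (k+1))]
              omega
            · rw [max_eq_left (by omega : j (k+1) ≤ j k)]
              omega
          have key3 : (P (A k ∩ Y ε (k+1) ⁻¹' {(j (k+1):ℝ)})).toReal * ε ^ (2 * j k)
              ≤ ε ^ ((N-m) + j (k+1) + 1 + (t+1)) * ε ^ (2 * j k) := by
            calc (P (A k ∩ Y ε (k+1) ⁻¹' {(j (k+1):ℝ)})).toReal * ε ^ (2 * j k)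
                ≤ ε ^ ((N-m) + j k + 1 + t) * ε ^ (2 * max (j k) (j (k+1))) := key
              _ = ε ^ ((N-m) + j k + 1 + t + 2 * max (j k) (j (k+1))) := (pow_add ε _ _).symm
              _ = ε ^ (((N-m) + j (k+1) + 1 + (t+1)) + 2 * j k) := by rw [hexp]
              _ = ε ^ ((N-m) + j (k+1) + 1 + (t+1)) * ε ^ (2 * j k) := pow_add ε _ _
          exact le_of_mul_le_mul_right key3 (pow_pos hεpos _)
      have hfin := hind (2*m-1) le_rfl
      have hidxf : -(m:ℤ)+1+(((2*m-1 : ℕ)):ℤ) = (m:ℤ) := by omega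
      rw [hidxf] at hfin
      have hexpf : (N - m) + j (m:ℤ) + 1 + (2*m-1) = 2*N := by
        rw [hjm']
        omega
      rw [hexpf] at hfin
      simp only [hAdef] at hfin
      exact hfin
    refine squeeze_zero' ?_ ?_
      ((tendsto_id.mono_left nhdsWithin_le_nhds : Tendsto (fun ε : ℝ => ε) (𝓝[>] 0) (𝓝 0)))
    · filter_upwards [hIoc] with ε hε
      exact div_nonneg ENNReal.toReal_nonneg (pow_nonneg hε.1.le _)
    · filter_upwards [hIoc] with ε hε
      have hb := hbound ε hε
      rw [div_le_iff₀ (pow_pos hε.1 _)]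
      calc (P {ω | ∀ k : ℤ, -(m:ℤ) ≤ k → k ≤ (m:ℤ) → Y ε k ω = (j k : ℝ)}).toReal
          ≤ ε ^ (2*N) := hb
        _ = ε * ε ^ (2*N-1) := by
            rw [← pow_succ']
            congr 1
            omega

end
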